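/- Let p be a prime, A a set, and let f: ℙ(ℚ²) → A be a map induced via a ℤ_(p)-lattice B ⊂ ℚ² from a nonconstant map f̄: ℙ(B/pB) → A. (1) If f̄ is a flag map, i.e., constant on the complement of one point of the projective line ℙ(B/pB), then there are exactly two equivalence classes of f-compatible ℤ_(p)-lattices in ℚ². (2) If f̄ is not a flag map, then every f-compatible ℤ_(p)-lattice in ℚ² is equivalent to B, i.e., there is exactly one equivalence class of f-compatible lattices. -/

import Mathlib

/- Common set-up for statements about projective spaces `ℙ(V)`: flag maps,
   `ℤ_(p)`-lattices and the associated reduction maps to `ℙ(B/pB)`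
   (two nonzero vectors are identified by `ρ_B` iff suitable nonzero scalar
   multiples of them lie in `B ∖ pB` and are congruent modulo `pB`). -/

universe u v w

section PreludeB

variable {k : Type u} [Field k] {V : Type v} [AddCommGroup V] [Module k V] {A : Type w}

/-- The projective subspace `ℙ(W) ⊆ ℙ(V)` attached to a submodule `W ⊆ V`. -/
def psub (W : Submodule k V) : Set (Projectivization k V) :=
  {x | ∃ v : V, ∃ h : v ≠ 0, Projectivization.mk k v h = x ∧ v ∈ W}

/-- The projective line of `ℙ(V)` through the classes of two (independent)
vectors `v`, `w`. -/
def lineP (v w : V) : Set (Projectivization k V) :=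
  {x | ∃ a b : k, ∃ h : a • v + b • w ≠ 0, Projectivization.mk k (a • v + b • w) h = x}

/-- `f` is a flag map on the finite-dimensional projective subspace `ℙ(W)`:
there is a chain (flag) of subspaces of `W` such that `f` is constant on each
successive difference. -/
def ChainFlagOn (f : Projectivization k V → A) (W : Submodule k V) : Prop :=
  ∃ c : ℕ → Submodule k V, c 0 = ⊥ ∧ (∃ n, c n = W) ∧ (∀ i, c i ≤ c (i + 1)) ∧
    (∀ i, c i ≤ W) ∧
    ∀ i, ∀ x ∈ psub (c (i + 1)) \ psub (c i), ∀ y ∈ psub (c (i + 1)) \ psub (c i), f x = f y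

/-- A flag map on a projective space over `F_p` (possibly infinite-dimensional):
the restriction to every finite-dimensional projective subspace is a flag map. -/
def FpFlagMap (f : Projectivization k V → A) : Prop :=
  ∀ W : Submodule k V, FiniteDimensional k W → ChainFlagOn f W

end PreludeB

section PreludeBQ

variable {V : Type v} [AddCommGroup V] [Module ℚ V] {A : Type w}

/-- The `ℤ_(p)`-span of a finite set of vectors (coefficients are rationals
with denominator coprime to `p`). -/
def zpSpanV (p : ℕ) (s : Finset V) : Set V :=
  {z | ∃ f : V → ℚ, (∀ t, ¬ (p ∣ (f t).den)) ∧ z = ∑ t ∈ s, f t • t}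

/-- `p·B`. -/
def pSMul (p : ℕ) (B : Set V) : Set V := {z | ∃ b ∈ B, z = (p : ℚ) • b}

/-- `B` is a `ℤ_(p)`-lattice in the `ℚ`-subspace `W`: a finitely generated
`ℤ_(p)`-submodule spanning `W` over `ℚ`. -/
def IsZpLatIn (p : ℕ) (W : Submodule ℚ V) (B : Set V) : Prop :=
  (∃ s : Finset V, B = zpSpanV p s) ∧ Submodule.span ℚ B = W

/-- Two nonzero vectors have the same image under the reduction map
`ρ_B : ℙ(V) → ℙ(B/pB)`. -/
def ZpRelV (p : ℕ) (B : Set V) (x y : V) : Prop :=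
  ∃ x' y' : V, (∃ a : ℚ, a ≠ 0 ∧ x' = a • x) ∧ (∃ b : ℚ, b ≠ 0 ∧ y' = b • y) ∧
    x' ∈ B ∧ x' ∉ pSMul p B ∧ y' ∈ B ∧ y' ∉ pSMul p B ∧ x' - y' ∈ pSMul p B

/-- Equivalence of lattices: `B' = a·B` for some `a ∈ ℚ^×`. -/
def LatEq (B B' : Set V) : Prop := ∃ a : ℚ, a ≠ 0 ∧ B' = (fun t => a • t) '' B

/-- `f`, restricted to `ℙ(W)`, is induced via the lattice `B` (i.e. it factors
through the reduction map `ρ_B`); such lattices are called `f`-compatible. -/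
def InducedOn (f : Projectivization ℚ V → A) (W : Submodule ℚ V) (p : ℕ) (B : Set V) : Prop :=
  ∀ x y : V, ∀ (hx : x ≠ 0) (hy : y ≠ 0), x ∈ W → y ∈ W → ZpRelV p B x y →
    f (Projectivization.mk ℚ x hx) = f (Projectivization.mk ℚ y hy)

/-- Preimage in `V` of the line of `ℙ(B/pB)` through the residue classes of
`q` and `w`. -/
def resLineV (p : ℕ) (B : Set V) (q w : V) : Set V :=
  {z | ∃ a b : ℚ, ¬ (p ∣ a.den) ∧ ¬ (p ∣ b.den) ∧ ∃ y ∈ pSMul p B, z = a • q + b • w + y}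

/-- `f` is induced via `B` from a flag map on the residue projective *line*
`ℙ(B/pB)`, i.e. from a map constant off one point (the class of `q`). -/
def ResFlagLine (f : Projectivization ℚ V → A) (p : ℕ) (B : Set V) : Prop :=
  ∃ q : V, q ∈ B \ pSMul p B ∧
    ∀ x y : V, ∀ (hx : x ≠ 0) (hy : y ≠ 0), ¬ ZpRelV p B x q → ¬ ZpRelV p B y q →
      f (Projectivization.mk ℚ x hx) = f (Projectivization.mk ℚ y hy)

/-- `f` is induced via `B` from a flag map on the residue projective *plane*
`ℙ(B/pB)`: for a flag (point `q̄`) ∈ (line `l̄` through `q̄` and `w̄`), the map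
is constant off `l̄` and constant on `l̄ ∖ {q̄}`. -/
def ResFlagPlane (f : Projectivization ℚ V → A) (p : ℕ) (B : Set V) : Prop :=
  ∃ q w : V, q ∈ B \ pSMul p B ∧ w ∈ B \ pSMul p B ∧ ¬ ZpRelV p B q w ∧
    (∀ x y : V, ∀ (hx : x ≠ 0) (hy : y ≠ 0),
      (∃ a : ℚ, a ≠ 0 ∧ a • x ∈ (B \ pSMul p B) ∧ a • x ∉ resLineV p B q w) →
      (∃ b : ℚ, b ≠ 0 ∧ b • y ∈ (B \ pSMul p B) ∧ b • y ∉ resLineV p B q w) →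
      f (Projectivization.mk ℚ x hx) = f (Projectivization.mk ℚ y hy)) ∧
    (∀ x y : V, ∀ (hx : x ≠ 0) (hy : y ≠ 0),
      (∃ a : ℚ, a ≠ 0 ∧ a • x ∈ resLineV p B q w \ pSMul p B) → ¬ ZpRelV p B x q →
      (∃ b : ℚ, b ≠ 0 ∧ b • y ∈ resLineV p B q w \ pSMul p B) → ¬ ZpRelV p B y q →
      f (Projectivization.mk ℚ x hx) = f (Projectivization.mk ℚ y hy))

/-- `f` is induced via `B` from a *flag map* `f̄ : ℙ(B/pB) → A` (general
dimension): there is a chain of sublattices from `pB` to `B` (i.e. a flag of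
subspaces of `B/pB`) with `f` constant on each successive difference. -/
def ResChainFlagOn (f : Projectivization ℚ V → A) (p : ℕ) (B : Set V) : Prop :=
  ∃ c : ℕ → Set V, c 0 = pSMul p B ∧ (∃ n, c n = B) ∧ (∀ i, c i ⊆ c (i + 1)) ∧
    (∀ i, (∀ x ∈ c i, ∀ y ∈ c i, x + y ∈ c i) ∧
      (∀ q : ℚ, ¬ (p ∣ q.den) → ∀ x ∈ c i, q • x ∈ c i)) ∧
    ∀ i, ∀ x y : V, ∀ (hx : x ≠ 0) (hy : y ≠ 0),
      (∃ a : ℚ, a ≠ 0 ∧ a • x ∈ c (i + 1) \ c i) →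
      (∃ b : ℚ, b ≠ 0 ∧ b • y ∈ c (i + 1) \ c i) →
      f (Projectivization.mk ℚ x hx) = f (Projectivization.mk ℚ y hy)

/-- `f` is a flag map on the finite-dimensional projective subspace
`ℙ(W) ⊆ ℙ(V)` over `ℚ`: either a chain (flag) of subspaces as over any field,
or induced via a `ℤ_(p)`-lattice `B` in `W` from a flag map on `ℙ(B/pB)`. -/
def QFlagOn (f : Projectivization ℚ V → A) (W : Submodule ℚ V) : Prop :=
  ChainFlagOn f W ∨
    ∃ p : ℕ, p.Prime ∧ ∃ B : Set V, IsZpLatIn p W B ∧ ResChainFlagOn f p B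

/-- A flag map on `ℙ(V)` over `ℚ` (possibly infinite-dimensional): the
restriction to every finite-dimensional projective subspace is a flag map. -/
def QFlagMap (f : Projectivization ℚ V → A) : Prop :=
  ∀ W : Submodule ℚ V, FiniteDimensional ℚ W → QFlagOn f W

end PreludeBQ



namespace S9

variable {p : ℕ}

/-- `a ∈ ℤ_(p)`. -/
def Rm (p : ℕ) (a : ℚ) : Prop := ¬ (p : ℕ) ∣ a.den

/-- `a ∈ p·ℤ_(p)`. -/
def Rq (p : ℕ) (a : ℚ) : Prop := Rm p (a / p)

section scalar
variable (hp : p.Prime)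
include hp

lemma Rm_zero : Rm p 0 := by simp [Rm, hp.one_lt.ne']
lemma Rm_one : Rm p 1 := by simp [Rm, hp.one_lt.ne']

lemma Rm_iff {a : ℚ} (ha : a ≠ 0) : Rm p a ↔ 0 ≤ padicValRat p a := by
  haveI : Fact p.Prime := ⟨hp⟩
  rw [padicValRat]
  constructor
  · intro h
    have : padicValNat p a.den = 0 := padicValNat.eq_zero_of_not_dvd h
    rw [this]
    simp [padicValInt]
  · intro h hdvd
    have h1 : 1 ≤ padicValNat p a.den :=
      one_le_padicValNat_of_dvd a.den_pos.ne' hdvd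
    have hnum : ¬ (p : ℤ) ∣ a.num := by
      intro hd
      have := a.reduced
      have : (p:ℕ) ∣ a.num.natAbs := Int.natCast_dvd_natCast.mp (by simpa [Int.dvd_natAbs] using hd)
      exact hp.one_lt.ne' (Nat.eq_one_of_dvd_coprimes a.reduced ‹(p:ℕ) ∣ a.num.natAbs› hdvd)
    have : padicValInt p a.num = 0 := padicValInt.eq_zero_of_not_dvd hnum
    omega

lemma Rm_of_val {a : ℚ} (h : 0 ≤ padicValRat p a) : Rm p a := by
  by_cases ha : a = 0
  · subst ha; exact Rm_zero hp
  · exact (Rm_iff hp ha).mpr h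

lemma val_p : padicValRat p (p : ℚ) = 1 := padicValRat.self hp.one_lt

lemma p_ne_zero' : (p : ℚ) ≠ 0 := by exact_mod_cast hp.ne_zero

lemma Rq_iff {a : ℚ} (ha : a ≠ 0) : Rq p a ↔ 1 ≤ padicValRat p a := by
  haveI : Fact p.Prime := ⟨hp⟩
  unfold Rq
  rw [Rm_iff hp (div_ne_zero ha (p_ne_zero' hp)),
    padicValRat.div ha (p_ne_zero' hp), val_p hp]
  omega

lemma Rq_zero : Rq p 0 := by simpa [Rq] using Rm_zero hp

lemma Rq_of_val {a : ℚ} (h : 1 ≤ padicValRat p a) : Rq p a := by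
  by_cases ha : a = 0
  · subst ha; exact Rq_zero hp
  · exact (Rq_iff hp ha).mpr h

lemma Rq.toRm {a : ℚ} (h : Rq p a) : Rm p a := by
  by_cases ha : a = 0
  · subst ha; exact Rm_zero hp
  · exact (Rm_iff hp ha).mpr (le_trans (by norm_num) ((Rq_iff hp ha).mp h))

lemma Rm_add {a b : ℚ} (ha : Rm p a) (hb : Rm p b) : Rm p (a + b) := by
  intro h
  have := Rat.add_den_dvd a b
  rcases (hp.dvd_mul.mp (h.trans this)) with h' | h'
  exacts [ha h', hb h']

lemma Rm_neg {a : ℚ} (ha : Rm p a) : Rm p (-a) := by simpa [Rm] using ha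

lemma Rm_sub {a b : ℚ} (ha : Rm p a) (hb : Rm p b) : Rm p (a - b) := by
  simpa [sub_eq_add_neg] using Rm_add hp ha (Rm_neg hp hb)

lemma Rm_mul {a b : ℚ} (ha : Rm p a) (hb : Rm p b) : Rm p (a * b) := by
  intro h
  have := Rat.mul_den_dvd a b
  rcases (hp.dvd_mul.mp (h.trans this)) with h' | h'
  exacts [ha h', hb h']

lemma Rq_add {a b : ℚ} (ha : Rq p a) (hb : Rq p b) : Rq p (a + b) := by
  unfold Rq at *; rw [add_div]; exact Rm_add hp ha hb

lemma Rq_neg {a : ℚ} (ha : Rq p a) : Rq p (-a) := by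
  unfold Rq at *; rw [neg_div]; exact Rm_neg hp ha

lemma Rq_sub {a b : ℚ} (ha : Rq p a) (hb : Rq p b) : Rq p (a - b) := by
  simpa [sub_eq_add_neg] using Rq_add hp ha (Rq_neg hp hb)

lemma Rm_mul_Rq {a b : ℚ} (ha : Rm p a) (hb : Rq p b) : Rq p (a * b) := by
  unfold Rq at *; rw [mul_div_assoc]; exact Rm_mul hp ha hb

lemma Rq_mul_Rm {a b : ℚ} (ha : Rq p a) (hb : Rm p b) : Rq p (a * b) := by
  rw [mul_comm]; exact Rm_mul_Rq hp hb ha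

/-- a unit of `ℤ_(p)`. -/
def isU (p : ℕ) (a : ℚ) : Prop := a ≠ 0 ∧ Rm p a ∧ ¬ Rq p a

lemma isU_iff {a : ℚ} : isU p a ↔ a ≠ 0 ∧ padicValRat p a = 0 := by
  constructor
  · rintro ⟨h0, h1, h2⟩
    refine ⟨h0, ?_⟩
    have hv := (Rm_iff hp h0).mp h1
    have h2' : ¬ (1 ≤ padicValRat p a) := fun h => h2 ((Rq_iff hp h0).mpr h)
    omega
  · rintro ⟨h0, h1⟩
    refine ⟨h0, (Rm_iff hp h0).mpr (le_of_eq h1.symm), fun h => ?_⟩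
    have := (Rq_iff hp h0).mp h
    omega

lemma isU_inv {a : ℚ} (h : isU p a) : isU p a⁻¹ := by
  haveI : Fact p.Prime := ⟨hp⟩
  rw [isU_iff hp] at *
  obtain ⟨h0, h1⟩ := h
  exact ⟨inv_ne_zero h0, by rw [padicValRat.inv, h1]; ring⟩

lemma isU.Rm {a : ℚ} (h : isU p a) : Rm p a := h.2.1

lemma not_Rm_one_div_p : ¬ Rm p ((p:ℚ)⁻¹) := by
  haveI : Fact p.Prime := ⟨hp⟩
  intro h
  have := (Rm_iff hp (inv_ne_zero (p_ne_zero' hp))).mp h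
  rw [padicValRat.inv, val_p hp] at this
  omega

lemma Rq_one_imp_false : ¬ Rq p 1 := by
  intro h
  have := (Rq_iff hp one_ne_zero).mp h
  rw [padicValRat.one] at this
  omega

/-- trichotomy -/
lemma Rm_or_inv {a : ℚ} (ha : a ≠ 0) : Rm p a ∨ Rm p a⁻¹ := by
  haveI : Fact p.Prime := ⟨hp⟩
  rcases le_or_gt 0 (padicValRat p a) with h | h
  · exact Or.inl ((Rm_iff hp ha).mpr h)
  · refine Or.inr ((Rm_iff hp (inv_ne_zero ha)).mpr ?_)
    rw [padicValRat.inv]; omega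

/-- not in `pZ_(p)` and nonzero implies inverse in `Z_(p)` -/
lemma inv_Rm_of_not_Rq {a : ℚ} (ha : a ≠ 0) (h : ¬ Rq p a) : Rm p a⁻¹ := by
  haveI : Fact p.Prime := ⟨hp⟩
  have : ¬ 1 ≤ padicValRat p a := fun hh => h ((Rq_iff hp ha).mpr hh)
  refine (Rm_iff hp (inv_ne_zero ha)).mpr ?_
  rw [padicValRat.inv]; omega

lemma Rq_p : Rq p (p : ℚ) := Rq_of_val hp (by rw [val_p hp])

/-- normal form: every nonzero rational is `e * p^k`, `e` a unit. -/
lemma exists_unit_scale {a : ℚ} (ha : a ≠ 0) : ∃ c : ℚ, c ≠ 0 ∧ isU p (c * a) := by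
  refine ⟨a⁻¹, inv_ne_zero ha, ?_⟩
  rw [inv_mul_cancel₀ ha, isU_iff hp]
  exact ⟨one_ne_zero, padicValRat.one⟩

lemma Rm_decomp {a : ℚ} (ha : a ≠ 0) (h : Rm p a) :
    ∃ n : ℕ, ∃ e : ℚ, isU p e ∧ a = e * (p:ℚ) ^ n := by
  have hv := (Rm_iff hp ha).mp h
  refine ⟨(padicValRat p a).toNat, a / (p:ℚ) ^ (padicValRat p a).toNat, ?_, ?_⟩
  · rw [isU_iff hp]
    have hpn : ((p:ℚ) ^ (padicValRat p a).toNat) ≠ 0 := pow_ne_zero _ (p_ne_zero' hp)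
    refine ⟨div_ne_zero ha hpn, ?_⟩
    haveI : Fact p.Prime := ⟨hp⟩
    rw [padicValRat.div ha hpn, padicValRat.pow (p:ℚ), val_p hp]
    omega
  · rw [div_mul_cancel₀ _ (pow_ne_zero _ (p_ne_zero' hp))]

end scalar
section vec

abbrev V2 := Fin 2 → ℚ

variable {p : ℕ} {A : Type w}

/-- The `ℤ_(p)`-span of two vectors. -/
def sp2 (p : ℕ) (u w : V2) : Set V2 :=
  {x | ∃ a b : ℚ, Rm p a ∧ Rm p b ∧ x = a • u + b • w}

lemma mem_sp2 {u w : V2} {a b : ℚ} (ha : Rm p a) (hb : Rm p b) :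
    a • u + b • w ∈ sp2 p u w := ⟨a, b, ha, hb, rfl⟩

variable (hp : p.Prime)
include hp

lemma sp2_add {u w : V2} {x y : V2} (hx : x ∈ sp2 p u w) (hy : y ∈ sp2 p u w) :
    x + y ∈ sp2 p u w := by
  obtain ⟨a, b, ha, hb, rfl⟩ := hx
  obtain ⟨c, d, hc, hd, rfl⟩ := hy
  exact ⟨a + c, b + d, Rm_add hp ha hc, Rm_add hp hb hd, by module⟩

lemma sp2_smul {u w : V2} {x : V2} {c : ℚ} (hc : Rm p c) (hx : x ∈ sp2 p u w) :
    c • x ∈ sp2 p u w := by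
  obtain ⟨a, b, ha, hb, rfl⟩ := hx
  exact ⟨c * a, c * b, Rm_mul hp hc ha, Rm_mul hp hc hb, by module⟩

omit hp

lemma sp2_comm {u w : V2} : sp2 p u w = sp2 p w u := by
  ext x
  constructor <;> rintro ⟨a, b, ha, hb, rfl⟩ <;> exact ⟨b, a, hb, ha, by module⟩

lemma sp2_zero_mem (hp : p.Prime) {u w : V2} : (0 : V2) ∈ sp2 p u w :=
  ⟨0, 0, Rm_zero hp, Rm_zero hp, by module⟩

/-- generators belong -/
lemma sp2_gen_left (hp : p.Prime) {u w : V2} : u ∈ sp2 p u w :=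
  ⟨1, 0, Rm_one hp, Rm_zero hp, by module⟩

lemma sp2_gen_right (hp : p.Prime) {u w : V2} : w ∈ sp2 p u w :=
  ⟨0, 1, Rm_zero hp, Rm_one hp, by module⟩

lemma indep_swap {u w : V2} (h : LinearIndependent ℚ ![u, w]) :
    LinearIndependent ℚ ![w, u] := by
  rw [LinearIndependent.pair_iff] at h ⊢
  intro s t hst
  have := h t s (by rw [← hst]; module)
  exact ⟨this.2, this.1⟩

lemma indep_coords {u w : V2} (h : LinearIndependent ℚ ![u, w]) {a b c d : ℚ}
    (hev : a • u + b • w = c • u + d • w) : a = c ∧ b = d := by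
  rw [LinearIndependent.pair_iff] at h
  have : (a - c) • u + (b - d) • w = 0 := by
    have h0 : a • u + b • w - (c • u + d • w) = 0 := by rw [hev]; simp
    rw [← h0]; module
  have := h _ _ this
  constructor <;> linarith [this.1, this.2]

lemma indep_ne_zero_left {u w : V2} (h : LinearIndependent ℚ ![u, w]) : u ≠ 0 := by
  rw [LinearIndependent.pair_iff] at h
  intro h0
  simpa using (h 1 0 (by rw [h0]; module)).1

lemma indep_ne_zero_right {u w : V2} (h : LinearIndependent ℚ ![u, w]) : w ≠ 0 :=
  indep_ne_zero_left (indep_swap h)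

lemma indep_ne {u w : V2} (h : LinearIndependent ℚ ![u, w]) : u ≠ w := by
  rw [LinearIndependent.pair_iff] at h
  intro h0
  simpa using (h 1 (-1) (by rw [h0]; module)).1

lemma indep_comb_ne_zero {u w : V2} (h : LinearIndependent ℚ ![u, w]) {a b : ℚ}
    (hab : ¬ (a = 0 ∧ b = 0)) : a • u + b • w ≠ 0 := by
  rw [LinearIndependent.pair_iff] at h
  intro h0
  exact hab (h a b h0)

lemma span_pair_top {u w : V2} (h : LinearIndependent ℚ ![u, w]) :
    Submodule.span ℚ ({u, w} : Set V2) = ⊤ := by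
  have hr : Set.range ![u, w] = {u, w} := by
    ext z; simp [Matrix.range_cons, Matrix.range_empty]; tauto
  apply Submodule.eq_top_of_finrank_eq
  have := finrank_span_eq_card h
  rw [hr] at this
  rw [this]
  simp [Module.finrank_fin_fun]

/-- every vector decomposes wrt an independent pair -/
lemma decomp2 {u w : V2} (h : LinearIndependent ℚ ![u, w]) (t : V2) :
    ∃ c d : ℚ, t = c • u + d • w := by
  have : t ∈ Submodule.span ℚ ({u, w} : Set V2) := by rw [span_pair_top h]; trivial
  obtain ⟨a, b, hab⟩ := Submodule.mem_span_pair.mp this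
  exact ⟨a, b, hab.symm⟩

include hp

/-- `zpSpanV p {u, w} = sp2 p u w` for `u ≠ w`. -/
lemma zpSpanV_pair {u w : V2} (huw : u ≠ w) : zpSpanV p {u, w} = sp2 p u w := by
  ext z
  constructor
  · rintro ⟨f, hf, rfl⟩
    rw [Finset.sum_pair huw]
    exact ⟨f u, f w, hf u, hf w, rfl⟩
  · rintro ⟨a, b, ha, hb, rfl⟩
    refine ⟨Function.update (Function.update (fun _ => (0:ℚ)) u a) w b, ?_, ?_⟩
    · intro t
      rcases eq_or_ne t w with rfl | h1
      · simpa [Rm] using hb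
      rcases eq_or_ne t u with rfl | h2
      · simpa [Function.update_of_ne h1, Rm] using ha
      · simp only [Function.update_of_ne h1, Function.update_of_ne h2]
        exact Rm_zero hp
    · rw [Finset.sum_pair huw]
      simp [Function.update_of_ne huw]

lemma zpSpanV_insert {t : V2} {s : Finset V2} (hts : t ∉ s) :
    zpSpanV p (insert t s) =
      {x | ∃ c : ℚ, ∃ z ∈ zpSpanV p s, Rm p c ∧ x = c • t + z} := by
  ext x
  constructor
  · rintro ⟨f, hf, rfl⟩
    exact ⟨f t, ∑ r ∈ s, f r • r, ⟨f, hf, rfl⟩, hf t, by rw [Finset.sum_insert hts]⟩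
  · rintro ⟨c, z, ⟨f, hf, rfl⟩, hc, rfl⟩
    refine ⟨Function.update f t c, ?_, ?_⟩
    · intro r
      rcases eq_or_ne r t with rfl | h1
      · simpa [Rm] using hc
      · simpa [Function.update_of_ne h1] using hf r
    · rw [Finset.sum_insert hts, Function.update_self]
      congr 1
      refine Finset.sum_congr rfl fun r hr => ?_
      rw [Function.update_of_ne (fun h : r = t => hts (h ▸ hr))]

end vec
section structthm

variable {p : ℕ} (hp : p.Prime)
include hp

/-- core step lemma: absorbing `ℤ_(p)·t` into `sp2 u w` when `t = c•u + d•w`,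
`c ∉ ℤ_(p)`, `d/c ∈ ℤ_(p)`. -/
lemma absorb_core {u w t : V2} (hind : LinearIndependent ℚ ![u, w]) {c d : ℚ}
    (ht : t = c • u + d • w) (hc : ¬ Rm p c) (hdc : Rm p (d * c⁻¹)) :
    {x | ∃ e : ℚ, ∃ z ∈ sp2 p u w, Rm p e ∧ x = e • t + z} = sp2 p t w ∧
      LinearIndependent ℚ ![t, w] := by
  have hc0 : c ≠ 0 := fun h => hc (h ▸ Rm_zero hp)
  have hcinv : Rm p c⁻¹ := (Rm_or_inv hp hc0).resolve_left hc
  constructor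
  · ext x
    constructor
    · rintro ⟨e, z, ⟨a, b, ha, hb, rfl⟩, he, rfl⟩
      refine ⟨e + a * c⁻¹, b - a * (d * c⁻¹), Rm_add hp he (Rm_mul hp ha hcinv),
        Rm_sub hp hb (Rm_mul hp ha hdc), ?_⟩
      rw [ht]
      have : u = c⁻¹ • (c • u + d • w) - (d * c⁻¹) • w := by
        rw [smul_add, smul_smul, smul_smul, inv_mul_cancel₀ hc0]
        module
      rw [show a • u = a • (c⁻¹ • (c • u + d • w) - (d * c⁻¹) • w) from by rw [← this]]
      module
    · rintro ⟨α, β, hα, hβ, rfl⟩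
      exact ⟨α, β • w, ⟨0, β, Rm_zero hp, hβ, by module⟩, hα, by module⟩
  · rw [LinearIndependent.pair_iff]
    intro s r hsr
    rw [ht] at hsr
    rw [LinearIndependent.pair_iff] at hind
    have := hind (s * c) (s * d + r) (by rw [← hsr]; module)
    have hs : s = 0 := by
      rcases mul_eq_zero.mp this.1 with h | h
      exacts [h, absurd h hc0]
    refine ⟨hs, ?_⟩
    have h2 := this.2
    rw [hs] at h2
    simpa using h2

/-- one induction step: `sp2 u w + ℤ_(p)·t` is again of the standard form. -/
lemma step_lemma {u w t : V2}
    (hinv : w = 0 ∨ LinearIndependent ℚ ![u, w]) :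
    ∃ u' w' : V2,
      {x | ∃ e : ℚ, ∃ z ∈ sp2 p u w, Rm p e ∧ x = e • t + z} = sp2 p u' w' ∧
        (w' = 0 ∨ LinearIndependent ℚ ![u', w']) := by
  -- absorption helper
  have habs : t ∈ sp2 p u w →
      {x | ∃ e : ℚ, ∃ z ∈ sp2 p u w, Rm p e ∧ x = e • t + z} = sp2 p u w := by
    intro htin
    ext x
    constructor
    · rintro ⟨e, z, hz, he, rfl⟩
      exact sp2_add hp (sp2_smul hp he htin) hz
    · intro hx
      exact ⟨0, x, hx, Rm_zero hp, by module⟩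
  rcases hinv with rfl | hind
  · -- degenerate: B = sp2 u 0
    by_cases hu : u = 0
    · refine ⟨t, 0, ?_, Or.inl rfl⟩
      subst hu
      ext x
      constructor
      · rintro ⟨e, z, ⟨a, b, ha, hb, rfl⟩, he, rfl⟩
        exact ⟨e, 0, he, Rm_zero hp, by module⟩
      · rintro ⟨a, b, ha, hb, rfl⟩
        exact ⟨a, 0, sp2_zero_mem hp, ha, by module⟩
    by_cases hline : ∃ e : ℚ, t = e • u
    · obtain ⟨e, rfl⟩ := hline
      by_cases he : Rm p e
      · exact ⟨u, 0, habs ⟨e, 0, he, Rm_zero hp, by module⟩, Or.inl rfl⟩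
      · have he0 : e ≠ 0 := fun h => he (h ▸ Rm_zero hp)
        have heinv : Rm p e⁻¹ := (Rm_or_inv hp he0).resolve_left he
        refine ⟨e • u, 0, ?_, Or.inl rfl⟩
        ext x
        constructor
        · rintro ⟨f, z, ⟨a, b, ha, hb, rfl⟩, hf, rfl⟩
          refine ⟨f + a * e⁻¹, 0, Rm_add hp hf (Rm_mul hp ha heinv), Rm_zero hp, ?_⟩
          have : a • u = (a * e⁻¹) • (e • u) := by
            rw [smul_smul, mul_assoc, inv_mul_cancel₀ he0, mul_one]
          rw [this]; module
        · rintro ⟨a, b, ha, hb, rfl⟩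
          exact ⟨a, 0, sp2_zero_mem hp, ha, by module⟩
    · -- t independent from u
      refine ⟨u, t, ?_, Or.inr ?_⟩
      · ext x
        constructor
        · rintro ⟨e, z, ⟨a, b, ha, hb, rfl⟩, he, rfl⟩
          exact ⟨a, e, ha, he, by module⟩
        · rintro ⟨a, b, ha, hb, rfl⟩
          exact ⟨b, a • u, ⟨a, 0, ha, Rm_zero hp, by module⟩, hb, by module⟩
      · rw [LinearIndependent.pair_iff]
        intro s r hsr
        by_cases hr : r = 0
        · subst hr
          refine ⟨?_, rfl⟩
          by_contra hs
          have h2 : s • u = 0 := by linear_combination (norm := module) hsr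
          rcases smul_eq_zero.mp h2 with h | h
          exacts [hs h, hu h]
        · exfalso
          apply hline
          have h2 : r • t = (-s) • u := by linear_combination (norm := module) hsr
          refine ⟨r⁻¹ * (-s), ?_⟩
          calc t = r⁻¹ • (r • t) := by rw [smul_smul, inv_mul_cancel₀ hr, one_smul]
          _ = r⁻¹ • ((-s) • u) := by rw [h2]
          _ = (r⁻¹ * (-s)) • u := by rw [smul_smul]
  · -- independent case
    obtain ⟨c, d, ht⟩ := decomp2 hind t
    by_cases hcd : Rm p c ∧ Rm p d
    · exact ⟨u, w, habs ⟨c, d, hcd.1, hcd.2, ht⟩, Or.inr hind⟩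
    · -- at least one coefficient not in Rm
      have main : ∀ u' w' : V2, LinearIndependent ℚ ![u', w'] →
          ∀ c' d' : ℚ, t = c' • u' + d' • w' → ¬ Rm p c' → Rm p (d' * c'⁻¹) →
          ∃ u'' w'' : V2,
            {x | ∃ e : ℚ, ∃ z ∈ sp2 p u' w', Rm p e ∧ x = e • t + z} = sp2 p u'' w'' ∧
              (w'' = 0 ∨ LinearIndependent ℚ ![u'', w'']) := by
        intro u' w' hind' c' d' ht' hc' hdc'
        obtain ⟨he, hi⟩ := absorb_core hp hind' ht' hc' hdc'
        exact ⟨t, w', he, Or.inr hi⟩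
      have hswap : {x | ∃ e : ℚ, ∃ z ∈ sp2 p u w, Rm p e ∧ x = e • t + z} =
          {x | ∃ e : ℚ, ∃ z ∈ sp2 p w u, Rm p e ∧ x = e • t + z} := by
        rw [sp2_comm]
      by_cases hc : Rm p c
      · -- then ¬ Rm d
        have hd : ¬ Rm p d := fun h => hcd ⟨hc, h⟩
        have hd0 : d ≠ 0 := fun h => hd (h ▸ Rm_zero hp)
        have : Rm p (c * d⁻¹) := Rm_mul hp hc ((Rm_or_inv hp hd0).resolve_left hd)
        rw [hswap]
        exact main w u (indep_swap hind) d c (by rw [ht]; module) hd this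
      · have hc0 : c ≠ 0 := fun h => hc (h ▸ Rm_zero hp)
        by_cases hdc : Rm p (d * c⁻¹)
        · exact main u w hind c d ht hc hdc
        · -- then Rm (c * d⁻¹) and ¬ Rm d
          have hd0 : d ≠ 0 := by
            intro h
            exact hdc (by rw [h, zero_mul]; exact Rm_zero hp)
          have h1 : Rm p (c * d⁻¹) := by
            have := Rm_or_inv hp (mul_ne_zero hd0 (inv_ne_zero hc0)) -- d * c⁻¹ ≠ 0
            rcases this with h | h
            · exact absurd h hdc
            · rwa [mul_inv, inv_inv, mul_comm] at h
          have hd : ¬ Rm p d := by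
            intro h
            exact hc (by
              have : c = c * d⁻¹ * d := by field_simp
              rw [this]; exact Rm_mul hp h1 h)
          rw [hswap]
          exact main w u (indep_swap hind) d c (by rw [ht]; module) hd h1

/-- every `zpSpanV` is of the standard form. -/
lemma zpSpanV_form (s : Finset V2) :
    ∃ u w : V2, zpSpanV p s = sp2 p u w ∧ (w = 0 ∨ LinearIndependent ℚ ![u, w]) := by
  classical
  induction s using Finset.induction_on with
  | empty =>
    refine ⟨0, 0, ?_, Or.inl rfl⟩
    ext x
    constructor
    · rintro ⟨f, hf, rfl⟩; exact ⟨0, 0, Rm_zero hp, Rm_zero hp, by simp⟩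
    · rintro ⟨a, b, ha, hb, rfl⟩
      exact ⟨fun _ => 0, fun t => Rm_zero hp, by simp⟩
  | @insert t s hts ih =>
    obtain ⟨u, w, hsw, hinv⟩ := ih
    obtain ⟨u', w', he, hinv'⟩ := step_lemma hp (t := t) hinv
    refine ⟨u', w', ?_, hinv'⟩
    rw [zpSpanV_insert hp hts, ← he, hsw]

/-- structure theorem for lattices in `ℚ²`. -/
lemma lattice_form {B : Set V2} (hB : IsZpLatIn p ⊤ B) :
    ∃ u w : V2, LinearIndependent ℚ ![u, w] ∧ B = sp2 p u w := by
  obtain ⟨⟨s, rfl⟩, hspan⟩ := hB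
  obtain ⟨u, w, hsw, hinv⟩ := zpSpanV_form hp s
  rcases hinv with rfl | hind
  · exfalso
    -- span of sp2 u 0 ⊆ ℚ∙u ≠ ⊤
    have hsub : Submodule.span ℚ (zpSpanV p s) ≤ Submodule.span ℚ ({u} : Set V2) := by
      apply Submodule.span_le.mpr
      rintro x hx
      rw [hsw] at hx
      obtain ⟨a, b, ha, hb, rfl⟩ := hx
      have : a • u + b • (0 : V2) = a • u := by module
      rw [this]
      exact Submodule.smul_mem _ _ (Submodule.mem_span_singleton_self u)
    rw [hspan] at hsub
    have h2 : (2 : ℕ) ≤ 1 := by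
      calc (2:ℕ) = Module.finrank ℚ V2 := by simp [Module.finrank_fin_fun]
      _ = Module.finrank ℚ (⊤ : Submodule ℚ V2) := by rw [finrank_top]
      _ ≤ Module.finrank ℚ (Submodule.span ℚ ({u} : Set V2)) := by
          apply Submodule.finrank_mono hsub
      _ ≤ 1 := by
          refine le_trans (finrank_span_le_card _) ?_
          simp
    omega
  · exact ⟨u, w, hind, hsw⟩

/-- converse: the standard form is a lattice. -/
lemma sp2_lat {u w : V2} (hind : LinearIndependent ℚ ![u, w]) :
    IsZpLatIn p ⊤ (sp2 p u w) := by
  refine ⟨⟨{u, w}, (zpSpanV_pair hp (indep_ne hind)).symm⟩, ?_⟩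
  rw [eq_top_iff, ← span_pair_top hind]
  apply Submodule.span_le.mpr
  rintro x (rfl | rfl)
  · exact Submodule.subset_span (sp2_gen_left hp)
  · exact Submodule.subset_span (sp2_gen_right hp)

end structthm
section rel

variable {p : ℕ} (hp : p.Prime)
include hp

lemma smul_coords {u w : V2} (a x₁ x₂ : ℚ) :
    a • (x₁ • u + x₂ • w) = (a * x₁) • u + (a * x₂) • w := by module

/-- membership in `sp2` via coordinates (independent case) -/
lemma mem_sp2_iff {u w : V2} (hind : LinearIndependent ℚ ![u, w]) {a b : ℚ} :
    a • u + b • w ∈ sp2 p u w ↔ Rm p a ∧ Rm p b := by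
  constructor
  · rintro ⟨c, d, hc, hd, hev⟩
    obtain ⟨h1, h2⟩ := indep_coords hind hev
    exact ⟨h1 ▸ hc, h2 ▸ hd⟩
  · rintro ⟨ha, hb⟩
    exact mem_sp2 ha hb

/-- membership in `p·sp2` via coordinates -/
lemma mem_psp2_iff {u w : V2} (hind : LinearIndependent ℚ ![u, w]) {a b : ℚ} :
    a • u + b • w ∈ pSMul p (sp2 p u w) ↔ Rq p a ∧ Rq p b := by
  have hp0 := p_ne_zero' hp
  constructor
  · rintro ⟨z, ⟨c, d, hc, hd, rfl⟩, hev⟩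
    rw [show ((p:ℚ)) • (c • u + d • w) = ((p:ℚ) * c) • u + ((p:ℚ) * d) • w from by module]
      at hev
    obtain ⟨h1, h2⟩ := indep_coords hind hev
    constructor
    · show Rm p (a / p)
      rw [h1, mul_comm, mul_div_assoc, div_self hp0, mul_one]; exact hc
    · show Rm p (b / p)
      rw [h2, mul_comm, mul_div_assoc, div_self hp0, mul_one]; exact hd
  · rintro ⟨ha, hb⟩
    refine ⟨(a / p) • u + (b / p) • w, mem_sp2 ha hb, ?_⟩
    rw [show ((p:ℚ)) • ((a/p) • u + (b/p) • w) = ((p:ℚ) * (a/p)) • u + ((p:ℚ) * (b/p)) • w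
      from by module]
    rw [mul_div_cancel₀ _ hp0, mul_div_cancel₀ _ hp0]

/-- the master characterization of `ZpRelV` in coordinates -/
lemma rel_iff {u w : V2} (hind : LinearIndependent ℚ ![u, w]) {x y : V2}
    {x₁ x₂ y₁ y₂ : ℚ} (hx : x = x₁ • u + x₂ • w) (hy : y = y₁ • u + y₂ • w) :
    ZpRelV p (sp2 p u w) x y ↔ ∃ a b : ℚ, a ≠ 0 ∧ b ≠ 0 ∧
      Rm p (a * x₁) ∧ Rm p (a * x₂) ∧ ¬ (Rq p (a * x₁) ∧ Rq p (a * x₂)) ∧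
      Rm p (b * y₁) ∧ Rm p (b * y₂) ∧ ¬ (Rq p (b * y₁) ∧ Rq p (b * y₂)) ∧
      Rq p (a * x₁ - b * y₁) ∧ Rq p (a * x₂ - b * y₂) := by
  subst hx hy
  constructor
  · rintro ⟨x', y', ⟨a, ha0, rfl⟩, ⟨b, hb0, rfl⟩, hxB, hxp, hyB, hyp, hd⟩
    rw [smul_coords hp] at hxB hxp hyB hyp hd
    rw [smul_coords hp] at hd  -- no-op safeguard
    rw [mem_sp2_iff hp hind] at hxB hyB
    rw [mem_psp2_iff hp hind] at hxp hyp
    rw [show (a * x₁) • u + (a * x₂) • w - ((b * y₁) • u + (b * y₂) • w)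
        = (a * x₁ - b * y₁) • u + (a * x₂ - b * y₂) • w from by module,
      mem_psp2_iff hp hind] at hd
    exact ⟨a, b, ha0, hb0, hxB.1, hxB.2, hxp, hyB.1, hyB.2, hyp, hd.1, hd.2⟩
  · rintro ⟨a, b, ha0, hb0, h1, h2, h3, h4, h5, h6, h7, h8⟩
    refine ⟨a • (x₁ • u + x₂ • w), b • (y₁ • u + y₂ • w),
      ⟨a, ha0, rfl⟩, ⟨b, hb0, rfl⟩, ?_, ?_, ?_, ?_, ?_⟩
    · rw [smul_coords hp, mem_sp2_iff hp hind]; exact ⟨h1, h2⟩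
    · rw [smul_coords hp, mem_psp2_iff hp hind]; exact h3
    · rw [smul_coords hp, mem_sp2_iff hp hind]; exact ⟨h4, h5⟩
    · rw [smul_coords hp, mem_psp2_iff hp hind]; exact h6
    · rw [smul_coords hp, smul_coords hp,
        show (a * x₁) • u + (a * x₂) • w - ((b * y₁) • u + (b * y₂) • w)
          = (a * x₁ - b * y₁) • u + (a * x₂ - b * y₂) • w from by module,
        mem_psp2_iff hp hind]
      exact ⟨h7, h8⟩

/-- symmetry -/
lemma rel_symm {u w : V2} {x y : V2} (h : ZpRelV p (sp2 p u w) x y) :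
    ZpRelV p (sp2 p u w) y x := by
  obtain ⟨x', y', hx', hy', h1, h2, h3, h4, h5⟩ := h
  refine ⟨y', x', hy', hx', h3, h4, h1, h2, ?_⟩
  obtain ⟨z, hz, hev⟩ := h5
  obtain ⟨a, b, ha, hb, rfl⟩ := hz
  refine ⟨-(a • u + b • w), ⟨-a, -b, Rm_neg hp ha, Rm_neg hp hb, by module⟩, ?_⟩
  have : y' - x' = -(x' - (y')) := by module
  rw [this, hev]
  module

/-- two normalizers differ by a unit -/
lemma normalizer_unit {u w : V2} (hind : LinearIndependent ℚ ![u, w]) {b b' y₁ y₂ : ℚ}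
    (hb : b ≠ 0) (hb' : b' ≠ 0)
    (h1 : Rm p (b * y₁)) (h2 : Rm p (b * y₂)) (h3 : ¬ (Rq p (b * y₁) ∧ Rq p (b * y₂)))
    (h4 : Rm p (b' * y₁)) (h5 : Rm p (b' * y₂)) (h6 : ¬ (Rq p (b' * y₁) ∧ Rq p (b' * y₂))) :
    isU p (b' * b⁻¹) := by
  -- trichotomy on b'/b
  have hbb0 : b' * b⁻¹ ≠ 0 := mul_ne_zero hb' (inv_ne_zero hb)
  rcases Rm_or_inv hp hbb0 with h | h
  · refine ⟨hbb0, h, fun hq => ?_⟩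
    apply h6
    have e1 : b' * y₁ = (b' * b⁻¹) * (b * y₁) := by field_simp
    have e2 : b' * y₂ = (b' * b⁻¹) * (b * y₂) := by field_simp
    exact ⟨e1 ▸ Rq_mul_Rm hp hq h1, e2 ▸ Rq_mul_Rm hp hq h2⟩
  · rw [mul_inv, inv_inv, mul_comm] at h
    -- h : Rm p (b * b'⁻¹); show this is a unit too, i.e. b'/b unit
    by_cases hq : Rq p (b * b'⁻¹)
    · exfalso
      apply h3
      have e1 : b * y₁ = (b * b'⁻¹) * (b' * y₁) := by field_simp
      have e2 : b * y₂ = (b * b'⁻¹) * (b' * y₂) := by field_simp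
      exact ⟨e1 ▸ Rq_mul_Rm hp hq h4, e2 ▸ Rq_mul_Rm hp hq h5⟩
    · have : isU p (b * b'⁻¹) := ⟨mul_ne_zero hb (inv_ne_zero hb'), h, hq⟩
      have := isU_inv hp this
      rwa [mul_inv, inv_inv, mul_comm] at this

/-- transitivity -/
lemma rel_trans {u w : V2} (hind : LinearIndependent ℚ ![u, w]) {x y z : V2}
    (hxy : ZpRelV p (sp2 p u w) x y) (hyz : ZpRelV p (sp2 p u w) y z) :
    ZpRelV p (sp2 p u w) x z := by
  obtain ⟨x₁, x₂, hx⟩ := decomp2 hind x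
  obtain ⟨y₁, y₂, hy⟩ := decomp2 hind y
  obtain ⟨z₁, z₂, hz⟩ := decomp2 hind z
  rw [rel_iff hp hind hx hy] at hxy
  rw [rel_iff hp hind hy hz] at hyz
  rw [rel_iff hp hind hx hz]
  obtain ⟨a, b, ha0, hb0, p1, p2, p3, p4, p5, p6, p7, p8⟩ := hxy
  obtain ⟨b', c, hb'0, hc0, q1, q2, q3, q4, q5, q6, q7, q8⟩ := hyz
  have hu : isU p (b' * b⁻¹) := normalizer_unit hp hind hb0 hb'0 p4 p5 p6 q1 q2 q3
  set e := b' * b⁻¹ with he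
  have heb : b' = e * b := by rw [he]; field_simp
  refine ⟨e * a, c, mul_ne_zero hu.1 ha0, hc0, ?_, ?_, ?_, q4, q5, q6, ?_, ?_⟩
  · rw [mul_assoc]; exact Rm_mul hp hu.2.1 p1
  · rw [mul_assoc]; exact Rm_mul hp hu.2.1 p2
  · intro hq
    apply p3
    have hinv := (isU_inv hp hu).2.1
    have e1 : a * x₁ = e⁻¹ * (e * a * x₁) := by rw [mul_assoc e, inv_mul_cancel_left₀ hu.1]
    have e2 : a * x₂ = e⁻¹ * (e * a * x₂) := by rw [mul_assoc e, inv_mul_cancel_left₀ hu.1]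
    exact ⟨e1 ▸ Rm_mul_Rq hp hinv hq.1, e2 ▸ Rm_mul_Rq hp hinv hq.2⟩
  · have : e * a * x₁ - c * z₁ = e * (a * x₁ - b * y₁) + (b' * y₁ - c * z₁) := by
      rw [heb]; ring
    rw [this]
    exact Rq_add hp (Rm_mul_Rq hp hu.2.1 p7) q7
  · have : e * a * x₂ - c * z₂ = e * (a * x₂ - b * y₂) + (b' * y₂ - c * z₂) := by
      rw [heb]; ring
    rw [this]
    exact Rq_add hp (Rm_mul_Rq hp hu.2.1 p8) q8

end rel
section classes

variable {p : ℕ} (hp : p.Prime)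
include hp

lemma Rm_pow_p (k : ℕ) : Rm p ((p:ℚ)^k) := by
  have : ((p:ℚ))^k = ((p^k : ℕ) : ℚ) := by push_cast; ring
  rw [this]
  show ¬ _ ∣ _
  rw [Rat.den_natCast]
  simpa using hp.one_lt.ne'

lemma Rq_pow_p {k : ℕ} (hk : 1 ≤ k) : Rq p ((p:ℚ)^k) := by
  obtain ⟨m, rfl⟩ := Nat.exists_eq_add_of_le hk
  rw [pow_add, pow_one]
  exact Rq_mul_Rm hp (Rq_p hp) (Rm_pow_p hp m)

lemma ne_zero_of_not_Rq {a : ℚ} (h : ¬ Rq p a) : a ≠ 0 :=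
  fun h0 => h (h0 ▸ Rq_zero hp)

lemma ne_zero_of_not_Rm {a : ℚ} (h : ¬ Rm p a) : a ≠ 0 :=
  fun h0 => h (h0 ▸ Rm_zero hp)

/-- a pair of scalars, not both zero, can be normalized -/
lemma norm_pair {x₁ x₂ : ℚ} (h : ¬ (x₁ = 0 ∧ x₂ = 0)) :
    ∃ a : ℚ, a ≠ 0 ∧ Rm p (a * x₁) ∧ Rm p (a * x₂) ∧
      ¬ (Rq p (a * x₁) ∧ Rq p (a * x₂)) := by
  by_cases h1 : x₁ = 0
  · have h2 : x₂ ≠ 0 := fun h2 => h ⟨h1, h2⟩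
    obtain ⟨c, hc0, hcu⟩ := exists_unit_scale hp h2
    exact ⟨c, hc0, by rw [h1, mul_zero]; exact Rm_zero hp, hcu.2.1,
      fun hq => hcu.2.2 hq.2⟩
  by_cases h2 : x₂ = 0
  · obtain ⟨c, hc0, hcu⟩ := exists_unit_scale hp h1
    exact ⟨c, hc0, hcu.2.1, by rw [h2, mul_zero]; exact Rm_zero hp,
      fun hq => hcu.2.2 hq.1⟩
  · -- both nonzero: compare
    rcases Rm_or_inv hp (div_ne_zero h2 h1) with hr | hr
    · -- x₂/x₁ ∈ Rm : normalize x₁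
      obtain ⟨c, hc0, hcu⟩ := exists_unit_scale hp h1
      refine ⟨c, hc0, hcu.2.1, ?_, fun hq => hcu.2.2 hq.1⟩
      have : c * x₂ = (c * x₁) * (x₂ / x₁) := by field_simp
      rw [this]
      exact Rm_mul hp hcu.2.1 hr
    · rw [inv_div] at hr
      obtain ⟨c, hc0, hcu⟩ := exists_unit_scale hp h2
      refine ⟨c, hc0, ?_, hcu.2.1, fun hq => hcu.2.2 hq.2⟩
      have : c * x₁ = (c * x₂) * (x₁ / x₂) := by field_simp
      rw [this]
      exact Rm_mul hp hcu.2.1 hr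

/-- class of the first basis vector: `x ∼ u` iff the slope is divisible by `p`. -/
lemma rel_gen_iff {u w : V2} (hind : LinearIndependent ℚ ![u, w]) {x : V2}
    {x₁ x₂ : ℚ} (hx : x = x₁ • u + x₂ • w) :
    ZpRelV p (sp2 p u w) x u ↔ x₁ ≠ 0 ∧ Rq p (x₂ / x₁) := by
  rw [rel_iff hp hind hx (show u = (1:ℚ) • u + (0:ℚ) • w from by module)]
  constructor
  · rintro ⟨a, b, ha0, hb0, h1, h2, h3, h4, h5, h6, h7, h8⟩
    rw [mul_one] at h4 h6 h7
    rw [mul_zero, sub_zero] at h8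
    have hb : ¬ Rq p b := fun hq => h6 ⟨hq, by rw [mul_zero]; exact Rq_zero hp⟩
    have hax₁ : ¬ Rq p (a * x₁) := by
      intro hq
      apply hb
      have : b = a * x₁ - (a * x₁ - b) := by ring
      rw [this]
      exact Rq_sub hp hq h7
    have hax₁0 : a * x₁ ≠ 0 := ne_zero_of_not_Rq hp hax₁
    have hx₁0 : x₁ ≠ 0 := fun h => hax₁0 (by rw [h, mul_zero])
    refine ⟨hx₁0, ?_⟩
    have : x₂ / x₁ = (a * x₂) * (a * x₁)⁻¹ := by
      rw [mul_inv]
      field_simp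
    rw [this]
    exact Rq_mul_Rm hp h8 (inv_Rm_of_not_Rq hp hax₁0 hax₁)
  · rintro ⟨hx₁0, hq⟩
    refine ⟨x₁⁻¹, 1, inv_ne_zero hx₁0, one_ne_zero, ?_, ?_, ?_, ?_, ?_, ?_, ?_, ?_⟩
    · rw [inv_mul_cancel₀ hx₁0]; exact Rm_one hp
    · rw [show x₁⁻¹ * x₂ = x₂ / x₁ from by rw [div_eq_inv_mul]]
      exact (hq.toRm hp)
    · rw [inv_mul_cancel₀ hx₁0]
      exact fun hc => Rq_one_imp_false hp hc.1
    · rw [mul_one]; exact Rm_one hp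
    · rw [mul_zero]; exact Rm_zero hp
    · rw [mul_one]
      exact fun hc => Rq_one_imp_false hp hc.1
    · rw [inv_mul_cancel₀ hx₁0, mul_one, sub_self]; exact Rq_zero hp
    · rw [mul_zero, sub_zero, show x₁⁻¹ * x₂ = x₂ / x₁ from by rw [div_eq_inv_mul]]
      exact hq

/-- independence of the dilated pair -/
lemma indep_dilate {u w : V2} (hind : LinearIndependent ℚ ![u, w]) {c : ℚ} (hc : c ≠ 0) :
    LinearIndependent ℚ ![u, c • w] := by
  rw [LinearIndependent.pair_iff] at hind ⊢
  intro s t hst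
  have := hind s (t * c) (by rw [← hst]; module)
  exact ⟨this.1, by
    rcases mul_eq_zero.mp this.2 with h | h
    exacts [h, absurd h hc]⟩

/-- the "far" class w.r.t. the smaller lattice `sp2 u (pⁿ•w)`:
all points with slope of valuation `< n` (or infinite slope) are mutually related. -/
lemma rel_far {u w : V2} (hind : LinearIndependent ℚ ![u, w]) {n : ℕ} {x y : V2}
    {x₁ x₂ y₁ y₂ : ℚ} (hx : x = x₁ • u + x₂ • w) (hy : y = y₁ • u + y₂ • w)
    (hx2 : x₂ ≠ 0) (hQx : Rq p ((p:ℚ)^n * x₁ / x₂))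
    (hy2 : y₂ ≠ 0) (hQy : Rq p ((p:ℚ)^n * y₁ / y₂)) :
    ZpRelV p (sp2 p u ((p:ℚ)^n • w)) x y := by
  have hpn : ((p:ℚ))^n ≠ 0 := pow_ne_zero _ (p_ne_zero' hp)
  have hind' := indep_dilate hp hind hpn
  have hx' : x = x₁ • u + (x₂ / (p:ℚ)^n) • ((p:ℚ)^n • w) := by
    rw [hx, smul_smul, div_mul_cancel₀ _ hpn]
  have hy' : y = y₁ • u + (y₂ / (p:ℚ)^n) • ((p:ℚ)^n • w) := by
    rw [hy, smul_smul, div_mul_cancel₀ _ hpn]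
  rw [rel_iff hp hind' hx' hy']
  refine ⟨(p:ℚ)^n / x₂, (p:ℚ)^n / y₂, div_ne_zero hpn hx2, div_ne_zero hpn hy2,
    ?_, ?_, ?_, ?_, ?_, ?_, ?_, ?_⟩
  · rw [show (p:ℚ)^n / x₂ * x₁ = (p:ℚ)^n * x₁ / x₂ from by ring]
    exact hQx.toRm hp
  · rw [show (p:ℚ)^n / x₂ * (x₂ / (p:ℚ)^n) = 1 from by field_simp]
    exact Rm_one hp
  · rw [show (p:ℚ)^n / x₂ * (x₂ / (p:ℚ)^n) = 1 from by field_simp]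
    exact fun hc => Rq_one_imp_false hp hc.2
  · rw [show (p:ℚ)^n / y₂ * y₁ = (p:ℚ)^n * y₁ / y₂ from by ring]
    exact hQy.toRm hp
  · rw [show (p:ℚ)^n / y₂ * (y₂ / (p:ℚ)^n) = 1 from by field_simp]
    exact Rm_one hp
  · rw [show (p:ℚ)^n / y₂ * (y₂ / (p:ℚ)^n) = 1 from by field_simp]
    exact fun hc => Rq_one_imp_false hp hc.2
  · rw [show (p:ℚ)^n / x₂ * x₁ = (p:ℚ)^n * x₁ / x₂ from by ring,
      show (p:ℚ)^n / y₂ * y₁ = (p:ℚ)^n * y₁ / y₂ from by ring]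
    exact Rq_sub hp hQx hQy
  · rw [show (p:ℚ)^n / x₂ * (x₂ / (p:ℚ)^n) = 1 from by field_simp,
      show (p:ℚ)^n / y₂ * (y₂ / (p:ℚ)^n) = 1 from by field_simp, sub_self]
    exact Rq_zero hp

/-- not related to `u` implies in the far class (for `n ≥ 1`). -/
lemma far_of_not_rel {u w : V2} (hind : LinearIndependent ℚ ![u, w]) {n : ℕ} (hn : 1 ≤ n)
    {x : V2} {x₁ x₂ : ℚ} (hx : x = x₁ • u + x₂ • w) (hx0 : ¬ (x₁ = 0 ∧ x₂ = 0))
    (hrel : ¬ ZpRelV p (sp2 p u w) x u) :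
    x₂ ≠ 0 ∧ Rq p ((p:ℚ)^n * x₁ / x₂) := by
  rw [rel_gen_iff hp hind hx] at hrel
  push_neg at hrel
  by_cases h1 : x₁ = 0
  · refine ⟨fun h2 => hx0 ⟨h1, h2⟩, ?_⟩
    rw [h1, mul_zero, zero_div]
    exact Rq_zero hp
  · have hnr := hrel h1
    have h2 : x₂ ≠ 0 := by
      intro h2
      exact hnr (by rw [h2, zero_div]; exact Rq_zero hp)
    refine ⟨h2, ?_⟩
    have hinv : Rm p (x₁ / x₂) := by
      have := inv_Rm_of_not_Rq hp (div_ne_zero h2 h1) hnr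
      rwa [inv_div] at this
    rw [show (p:ℚ)^n * x₁ / x₂ = (p:ℚ)^n * (x₁ / x₂) from by ring]
    exact Rq_mul_Rm hp (Rq_pow_p hp hn) hinv

end classes
section keylemma

variable {p : ℕ} (hp : p.Prime)

lemma pSMul_image {B : Set V2} {a : ℚ} :
    pSMul p ((fun t => a • t) '' B) = (fun t => a • t) '' (pSMul p B) := by
  ext z
  constructor
  · rintro ⟨-, ⟨b, hb, rfl⟩, rfl⟩
    exact ⟨(p:ℚ) • b, ⟨b, hb, rfl⟩, by module⟩
  · rintro ⟨-, ⟨b, hb, rfl⟩, rfl⟩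
    exact ⟨a • b, ⟨b, hb, rfl⟩, by module⟩

lemma mem_image_smul_iff {B : Set V2} {a : ℚ} (ha : a ≠ 0) {z : V2} :
    z ∈ (fun t => a • t) '' B ↔ a⁻¹ • z ∈ B := by
  constructor
  · rintro ⟨b, hb, rfl⟩
    rwa [smul_smul, inv_mul_cancel₀ ha, one_smul]
  · intro h
    refine ⟨a⁻¹ • z, h, ?_⟩
    show a • a⁻¹ • z = z
    rw [smul_smul, mul_inv_cancel₀ ha, one_smul]

lemma rel_image_iff {B : Set V2} {a : ℚ} (ha : a ≠ 0) {x y : V2} :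
    ZpRelV p ((fun t => a • t) '' B) x y ↔ ZpRelV p B x y := by
  have hmem : ∀ z : V2, z ∈ (fun t => a • t) '' B ↔ a⁻¹ • z ∈ B :=
    fun z => mem_image_smul_iff ha
  have hpmem : ∀ z : V2, z ∈ pSMul p ((fun t => a • t) '' B) ↔ a⁻¹ • z ∈ pSMul p B := by
    intro z
    rw [pSMul_image]
    exact mem_image_smul_iff ha
  constructor
  · rintro ⟨x', y', ⟨c, hc, rfl⟩, ⟨d, hd, rfl⟩, h1, h2, h3, h4, h5⟩
    refine ⟨a⁻¹ • c • x, a⁻¹ • d • y, ⟨a⁻¹ * c, mul_ne_zero (inv_ne_zero ha) hc, by module⟩,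
      ⟨a⁻¹ * d, mul_ne_zero (inv_ne_zero ha) hd, by module⟩,
      (hmem _).mp h1, fun hc' => h2 ((hpmem _).mpr hc'),
      (hmem _).mp h3, fun hc' => h4 ((hpmem _).mpr hc'), ?_⟩
    · have h6 := (hpmem _).mp h5
      rw [show a⁻¹ • (c • x - d • y) = a⁻¹ • c • x - a⁻¹ • d • y from by module] at h6
      exact h6
  · rintro ⟨x', y', ⟨c, hc, rfl⟩, ⟨d, hd, rfl⟩, h1, h2, h3, h4, h5⟩
    refine ⟨a • c • x, a • d • y, ⟨a * c, mul_ne_zero ha hc, by module⟩,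
      ⟨a * d, mul_ne_zero ha hd, by module⟩, ?_, ?_, ?_, ?_, ?_⟩
    · rw [hmem _, smul_smul, smul_smul, inv_mul_cancel₀ ha, one_mul]; exact h1
    · rw [hpmem _, smul_smul, smul_smul, inv_mul_cancel₀ ha, one_mul]; exact h2
    · rw [hmem _, smul_smul, smul_smul, inv_mul_cancel₀ ha, one_mul]; exact h3
    · rw [hpmem _, smul_smul, smul_smul, inv_mul_cancel₀ ha, one_mul]; exact h4
    · rw [show (a • c • x - a • d • y) = a • (c • x - d • y) from by module, hpmem _,
        smul_smul, inv_mul_cancel₀ ha, one_smul]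
      exact h5

lemma inducedOn_image {A : Type w} {f : Projectivization ℚ V2 → A} {B : Set V2} {a : ℚ}
    (ha : a ≠ 0) (h : InducedOn f ⊤ p B) : InducedOn f ⊤ p ((fun t => a • t) '' B) := by
  intro x y hx hy hxW hyW hrel
  exact h x y hx hy hxW hyW ((rel_image_iff ha).mp hrel)

lemma image_sp2 {u w : V2} {a : ℚ} :
    (fun t => a • t) '' sp2 p u w = sp2 p (a • u) (a • w) := by
  ext z
  constructor
  · rintro ⟨-, ⟨c, d, hc, hd, rfl⟩, rfl⟩
    exact ⟨c, d, hc, hd, by module⟩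
  · rintro ⟨c, d, hc, hd, rfl⟩
    exact ⟨c • u + d • w, ⟨c, d, hc, hd, rfl⟩, by module⟩

include hp

lemma indep_smul_pair {u w : V2} (hind : LinearIndependent ℚ ![u, w]) {a : ℚ} (ha : a ≠ 0) :
    LinearIndependent ℚ ![a • u, a • w] := by
  rw [LinearIndependent.pair_iff] at hind ⊢
  intro s t hst
  have := hind (s * a) (t * a) (by rw [← hst]; module)
  constructor
  · rcases mul_eq_zero.mp this.1 with h | h; exacts [h, absurd h ha]
  · rcases mul_eq_zero.mp this.2 with h | h; exacts [h, absurd h ha]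

/-- completing an element of `B \ pB` to a basis of `B` -/
lemma complete_basis {u w : V2} (hind : LinearIndependent ℚ ![u, w]) {x : V2}
    (hxB : x ∈ sp2 p u w) (hxp : x ∉ pSMul p (sp2 p u w)) :
    ∃ h : V2, LinearIndependent ℚ ![x, h] ∧ sp2 p x h = sp2 p u w := by
  obtain ⟨α, β, hα, hβ, rfl⟩ := hxB
  rw [mem_psp2_iff hp hind] at hxp
  -- core: ¬ Rq α case with basis (u,w)
  have core : ∀ u' w' : V2, LinearIndependent ℚ ![u', w'] → ∀ α' β' : ℚ,
      Rm p α' → Rm p β' → ¬ Rq p α' →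
      LinearIndependent ℚ ![α' • u' + β' • w', w'] ∧
        sp2 p (α' • u' + β' • w') w' = sp2 p u' w' := by
    intro u' w' hind' α' β' hα' hβ' hq
    have hα0 : α' ≠ 0 := ne_zero_of_not_Rq hp hq
    have hαinv : Rm p α'⁻¹ := inv_Rm_of_not_Rq hp hα0 hq
    constructor
    · rw [LinearIndependent.pair_iff] at hind' ⊢
      intro s t hst
      have := hind' (s * α') (s * β' + t) (by rw [← hst]; module)
      have hs : s = 0 := by
        rcases mul_eq_zero.mp this.1 with h | h; exacts [h, absurd h hα0]
      refine ⟨hs, ?_⟩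
      have := this.2
      rw [hs] at this
      simpa using this
    · ext z
      constructor
      · rintro ⟨c, d, hc, hd, rfl⟩
        exact ⟨c * α', c * β' + d, Rm_mul hp hc hα', Rm_add hp (Rm_mul hp hc hβ') hd,
          by module⟩
      · rintro ⟨c, d, hc, hd, rfl⟩
        refine ⟨c * α'⁻¹, d - c * α'⁻¹ * β', Rm_mul hp hc hαinv,
          Rm_sub hp hd (Rm_mul hp (Rm_mul hp hc hαinv) hβ'), ?_⟩
        have hu : u' = α'⁻¹ • (α' • u' + β' • w') - (α'⁻¹ * β') • w' := by
          rw [smul_add, smul_smul, inv_mul_cancel₀ hα0]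
          module
        rw [show c • u' = c • (α'⁻¹ • (α' • u' + β' • w') - (α'⁻¹ * β') • w') from by
          rw [← hu]]
        module
  by_cases hq : Rq p α
  · -- then ¬ Rq β; use swapped basis
    have hqβ : ¬ Rq p β := fun h => hxp ⟨hq, h⟩
    obtain ⟨h1, h2⟩ := core w u (indep_swap hind) β α hβ hα hqβ
    refine ⟨u, ?_, ?_⟩
    · rw [show β • w + α • u = α • u + β • w from by module] at h1
      exact h1
    · rw [show β • w + α • u = α • u + β • w from by module] at h2
      rw [h2, sp2_comm]
  · obtain ⟨h1, h2⟩ := core u w hind α β hα hβ hq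
    exact ⟨w, h1, h2⟩

lemma unit_rescale {x y : V2} {e : ℚ} (he : isU p e) :
    sp2 p x (e • y) = sp2 p x y := by
  ext z
  constructor
  · rintro ⟨c, d, hc, hd, rfl⟩
    exact ⟨c, d * e, hc, Rm_mul hp hd he.2.1, by module⟩
  · rintro ⟨c, d, hc, hd, rfl⟩
    refine ⟨c, d * e⁻¹, hc, Rm_mul hp hd (isU_inv hp he).2.1, ?_⟩
    have : (d * e⁻¹) • (e • y) = d • y := by
      rw [smul_smul, mul_assoc, inv_mul_cancel₀ he.1, mul_one]
    rw [this]
  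
lemma absorb_coeff {G h G₂ : V2} {c d : ℚ} (hc : Rm p c) (hG₂ : G₂ = c • G + d • h) :
    sp2 p G G₂ = sp2 p G (d • h) := by
  ext z
  constructor
  · rintro ⟨e, g, he, hg, rfl⟩
    exact ⟨e + g * c, g, Rm_add hp he (Rm_mul hp hg hc), hg, by rw [hG₂]; module⟩
  · rintro ⟨e, g, he, hg, rfl⟩
    exact ⟨e - g * c, g, Rm_sub hp he (Rm_mul hp hg hc), hg, by rw [hG₂]; module⟩

/-- KEY normal-form lemma: any lattice `B'`, relative to a lattice `B = sp2 u w`,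
is equivalent to `sp2 g (pⁿ • h)` for a suitable basis `(g,h)` of `B`. -/
lemma key_lemma {u w : V2} (hind : LinearIndependent ℚ ![u, w]) {B' : Set V2}
    (hB' : IsZpLatIn p ⊤ B') :
    ∃ (a : ℚ) (g h : V2) (n : ℕ), a ≠ 0 ∧ LinearIndependent ℚ ![g, h] ∧
      sp2 p g h = sp2 p u w ∧ (fun t => a • t) '' B' = sp2 p g ((p:ℚ)^n • h) := by
  obtain ⟨g₁, g₂, hindg, rfl⟩ := lattice_form hp hB'
  -- normalize: find a ≠ 0 with a•g₁, a•g₂ ∈ B and one of them ∉ pB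
  obtain ⟨c₁, d₁, he₁⟩ := decomp2 hind g₁
  obtain ⟨c₂, d₂, he₂⟩ := decomp2 hind g₂
  have hnz₁ : ¬ (c₁ = 0 ∧ d₁ = 0) := by
    rintro ⟨rfl, rfl⟩
    exact indep_ne_zero_left hindg (by rw [he₁]; module)
  have hnz₂ : ¬ (c₂ = 0 ∧ d₂ = 0) := by
    rintro ⟨rfl, rfl⟩
    exact indep_ne_zero_right hindg (by rw [he₂]; module)
  obtain ⟨a₁, ha₁0, ha₁1, ha₁2, ha₁3⟩ := norm_pair hp hnz₁
  obtain ⟨a₂, ha₂0, ha₂1, ha₂2, ha₂3⟩ := norm_pair hp hnz₂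
  -- get a with both in B, one not in pB
  have main : ∀ a : ℚ, a ≠ 0 →
      (a • g₁ ∈ sp2 p u w) → (a • g₂ ∈ sp2 p u w) →
      (a • g₁ ∉ pSMul p (sp2 p u w) ∨ a • g₂ ∉ pSMul p (sp2 p u w)) →
      ∃ (a' : ℚ) (g h : V2) (n : ℕ), a' ≠ 0 ∧ LinearIndependent ℚ ![g, h] ∧
        sp2 p g h = sp2 p u w ∧
          (fun t => a' • t) '' sp2 p g₁ g₂ = sp2 p g ((p:ℚ)^n • h) := by
    -- first reduce to the case a•g₁ ∉ pB by symmetry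
    have core : ∀ G G₂ : V2, LinearIndependent ℚ ![G, G₂] →
        G ∈ sp2 p u w → G₂ ∈ sp2 p u w → G ∉ pSMul p (sp2 p u w) →
        ∃ (g h : V2) (n : ℕ), LinearIndependent ℚ ![g, h] ∧
          sp2 p g h = sp2 p u w ∧ sp2 p G G₂ = sp2 p g ((p:ℚ)^n • h) := by
      intro G G₂ hindG hGB hG₂B hGp
      obtain ⟨h, hindGh, hGh⟩ := complete_basis hp hind hGB hGp
      -- G₂ in terms of (G,h)
      have hG₂Gh : G₂ ∈ sp2 p G h := by rw [hGh]; exact hG₂B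
      obtain ⟨c, d, hc, hd, hG₂⟩ := hG₂Gh
      have hd0 : d ≠ 0 := by
        rintro rfl
        rw [LinearIndependent.pair_iff] at hindG
        have := hindG c (-1) (by rw [hG₂]; module)
        norm_num at this
      obtain ⟨n, e, he, hde⟩ := Rm_decomp hp hd0 hd
      refine ⟨G, e • h, n, ?_, ?_, ?_⟩
      · exact indep_dilate hp hindGh he.1
      · rw [unit_rescale hp he]; exact hGh
      · rw [absorb_coeff hp hc hG₂]
        have : d • h = ((p:ℚ)^n) • (e • h) := by
          rw [smul_smul, hde, mul_comm]
        rw [this]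
    intro a ha0 h1 h2 h3
    have himg : (fun t => a • t) '' sp2 p g₁ g₂ = sp2 p (a • g₁) (a • g₂) := image_sp2
    rcases h3 with h3 | h3
    · obtain ⟨g, h, n, i1, i2, i3⟩ :=
        core (a • g₁) (a • g₂) (indep_smul_pair hp hindg ha0) h1 h2 h3
      exact ⟨a, g, h, n, ha0, i1, i2, by rw [himg, i3]⟩
    · obtain ⟨g, h, n, i1, i2, i3⟩ :=
        core (a • g₂) (a • g₁) (indep_swap (indep_smul_pair hp hindg ha0)) h2 h1 h3
      refine ⟨a, g, h, n, ha0, i1, i2, ?_⟩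
      rw [himg, sp2_comm, i3]
  -- memberships via coordinates
  have m₁ : ∀ a : ℚ, a • g₁ = (a * c₁) • u + (a * d₁) • w := by
    intro a; rw [he₁]; module
  have m₂ : ∀ a : ℚ, a • g₂ = (a * c₂) • u + (a * d₂) • w := by
    intro a; rw [he₂]; module
  have hg₁B : a₁ • g₁ ∈ sp2 p u w := by
    rw [m₁, mem_sp2_iff hp hind]; exact ⟨ha₁1, ha₁2⟩
  have hg₂B : a₂ • g₂ ∈ sp2 p u w := by
    rw [m₂, mem_sp2_iff hp hind]; exact ⟨ha₂1, ha₂2⟩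
  have hg₁p : a₁ • g₁ ∉ pSMul p (sp2 p u w) := by
    rw [m₁, mem_psp2_iff hp hind]; exact ha₁3
  have hg₂p : a₂ • g₂ ∉ pSMul p (sp2 p u w) := by
    rw [m₂, mem_psp2_iff hp hind]; exact ha₂3
  rcases Rm_or_inv hp (div_ne_zero ha₁0 ha₂0) with hr | hr
  · -- a₁/a₂ ∈ R: use a₁
    apply main a₁ ha₁0 hg₁B
    · have : a₁ • g₂ = (a₁ / a₂) • (a₂ • g₂) := by
        rw [smul_smul, div_mul_cancel₀ _ ha₂0]
      rw [this]
      exact sp2_smul hp hr hg₂B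
    · exact Or.inl hg₁p
  · -- a₂/a₁ ∈ R: use a₂
    rw [inv_div] at hr
    apply main a₂ ha₂0
    · have : a₂ • g₁ = (a₂ / a₁) • (a₁ • g₁) := by
        rw [smul_smul, div_mul_cancel₀ _ ha₁0]
      rw [this]
      exact sp2_smul hp hr hg₁B
    · exact hg₂B
    · exact Or.inr hg₂p

end keylemma
section analysis

variable {p : ℕ} (hp : p.Prime) {A : Type w} {f : Projectivization ℚ V2 → A}
include hp

lemma coords_ne {u w : V2} {x : V2} {x₁ x₂ : ℚ} (hx : x = x₁ • u + x₂ • w)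
    (hx0 : x ≠ 0) : ¬ (x₁ = 0 ∧ x₂ = 0) := by
  rintro ⟨rfl, rfl⟩
  exact hx0 (by rw [hx]; module)

/-- flag map property from a compatible sublattice of level `n ≥ 1`. -/
lemma flag_of_far {g h : V2} (hind : LinearIndependent ℚ ![g, h]) {n : ℕ} (hn : 1 ≤ n)
    (hindB' : InducedOn f ⊤ p (sp2 p g ((p:ℚ)^n • h))) :
    ∀ x y : V2, ∀ (hx : x ≠ 0) (hy : y ≠ 0),
      ¬ ZpRelV p (sp2 p g h) x g → ¬ ZpRelV p (sp2 p g h) y g →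
      f (Projectivization.mk ℚ x hx) = f (Projectivization.mk ℚ y hy) := by
  intro x y hx hy hrx hry
  obtain ⟨x₁, x₂, hxe⟩ := decomp2 hind x
  obtain ⟨y₁, y₂, hye⟩ := decomp2 hind y
  obtain ⟨hx2, hQx⟩ := far_of_not_rel hp hind hn hxe (coords_ne hp hxe hx) hrx
  obtain ⟨hy2, hQy⟩ := far_of_not_rel hp hind hn hye (coords_ne hp hye hy) hry
  exact hindB' x y hx hy trivial trivial
    (rel_far hp hind hxe hye hx2 hQx hy2 hQy)

/-- constancy from a compatible sublattice of level `n ≥ 2`. -/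
lemma const_of_n2 {g h : V2} (hind : LinearIndependent ℚ ![g, h]) {n : ℕ} (hn : 2 ≤ n)
    (hindB : InducedOn f ⊤ p (sp2 p g h))
    (hindB' : InducedOn f ⊤ p (sp2 p g ((p:ℚ)^n • h))) :
    ∀ x y : V2, ∀ (hx : x ≠ 0) (hy : y ≠ 0),
      f (Projectivization.mk ℚ x hx) = f (Projectivization.mk ℚ y hy) := by
  have hz0 : g + (p:ℚ) • h ≠ 0 := by
    rw [show g + (p:ℚ) • h = (1:ℚ) • g + (p:ℚ) • h from by module]
    exact indep_comb_ne_zero hind (fun hc => one_ne_zero hc.1)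
  have key : ∀ x : V2, ∀ hx : x ≠ 0,
      f (Projectivization.mk ℚ x hx) = f (Projectivization.mk ℚ (g + (p:ℚ) • h) hz0) := by
    intro x hx
    have hze : g + (p:ℚ) • h = (1:ℚ) • g + (p:ℚ) • h := by module
    by_cases hrel : ZpRelV p (sp2 p g h) x g
    · have hg0 : g ≠ 0 := indep_ne_zero_left hind
      have h1 : f (Projectivization.mk ℚ x hx) = f (Projectivization.mk ℚ g hg0) :=
        hindB x g hx hg0 trivial trivial hrel
      have hrelz : ZpRelV p (sp2 p g h) (g + (p:ℚ) • h) g := by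
        rw [rel_gen_iff hp hind hze]
        refine ⟨one_ne_zero, ?_⟩
        rw [div_one]
        exact Rq_p hp
      have h2 : f (Projectivization.mk ℚ (g + (p:ℚ) • h) hz0)
          = f (Projectivization.mk ℚ g hg0) :=
        hindB _ g hz0 hg0 trivial trivial hrelz
      rw [h1, h2]
    · obtain ⟨x₁, x₂, hxe⟩ := decomp2 hind x
      obtain ⟨hx2, hQx⟩ := far_of_not_rel hp hind (le_trans (by norm_num) hn) hxe
        (coords_ne hp hxe hx) hrel
      have hQz : Rq p ((p:ℚ)^n * 1 / (p:ℚ)) := by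
        have e : ((p:ℚ))^n = (p:ℚ)^(n-1) * (p:ℚ) := by
          rw [← pow_succ]
          congr 1
          omega
        rw [mul_one, e, mul_div_cancel_right₀ _ (p_ne_zero' hp)]
        exact Rq_pow_p hp (by omega)
      exact hindB' x _ hx hz0 trivial trivial
        (rel_far hp hind hxe hze hx2 hQx (p_ne_zero' hp) hQz)
  intro x y hx hy
  rw [key x hx, key y hy]

/-- the lattice `sp2 q (p•h)` is `f`-compatible when `f` is a flag map at `q`. -/
lemma induced_B2 {q h : V2} (hind : LinearIndependent ℚ ![q, h])
    (hindB : InducedOn f ⊤ p (sp2 p q h))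
    (Hq : ∀ x y : V2, ∀ (hx : x ≠ 0) (hy : y ≠ 0),
      ¬ ZpRelV p (sp2 p q h) x q → ¬ ZpRelV p (sp2 p q h) y q →
      f (Projectivization.mk ℚ x hx) = f (Projectivization.mk ℚ y hy)) :
    InducedOn f ⊤ p (sp2 p q ((p:ℚ) • h)) := by
  intro x y hx hy hxt hyt hrel
  by_cases hx0 : x = 0
  · subst hx0; exact absurd rfl hx
  by_cases hy0 : y = 0
  · subst hy0; exact absurd rfl hy
  obtain ⟨x₁, x₂, hxe⟩ := decomp2 hind x
  obtain ⟨y₁, y₂, hye⟩ := decomp2 hind y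
  have hp0 := p_ne_zero' hp
  have hind' := indep_dilate hp hind hp0
  have hxe' : x = x₁ • q + (x₂ / (p:ℚ)) • ((p:ℚ) • h) := by
    rw [hxe, smul_smul, div_mul_cancel₀ _ hp0]
  have hye' : y = y₁ • q + (y₂ / (p:ℚ)) • ((p:ℚ) • h) := by
    rw [hye, smul_smul, div_mul_cancel₀ _ hp0]
  rw [rel_iff hp hind' hxe' hye'] at hrel
  obtain ⟨a, b, ha0, hb0, A1, A2, A3, B1, B2, B3, D1, D2⟩ := hrel
  have hq0 : q ≠ 0 := indep_ne_zero_left hind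
  by_cases hqa : Rq p (a * x₁)
  · -- far case: both unrelated to q
    have hqb : Rq p (b * y₁) := by
      have e : b * y₁ = a * x₁ - (a * x₁ - b * y₁) := by ring
      rw [e]
      exact Rq_sub hp hqa D1
    have notrel : ∀ (z₁ z₂ c : ℚ), c ≠ 0 → Rq p (c * z₁) →
        ¬ (Rq p (c * z₁) ∧ Rq p (c * (z₂ / (p:ℚ)))) →
        ¬ (z₁ ≠ 0 ∧ Rq p (z₂ / z₁)) := by
      rintro z₁ z₂ c hc0 hcq hcand ⟨hz1, hz2⟩
      apply hcand
      refine ⟨hcq, ?_⟩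
      have hcq' : Rm p ((c * z₁) / p) := hcq
      have e : c * (z₂ / (p:ℚ)) = ((c * z₁) / p) * (z₂ / z₁) := by
        field_simp
      rw [e]
      exact Rm_mul_Rq hp hcq' hz2
    have hnx : ¬ ZpRelV p (sp2 p q h) x q := by
      rw [rel_gen_iff hp hind hxe]
      exact notrel x₁ x₂ a ha0 hqa A3
    have hny : ¬ ZpRelV p (sp2 p q h) y q := by
      rw [rel_gen_iff hp hind hye]
      exact notrel y₁ y₂ b hb0 hqb B3
    exact Hq x y hx hy hnx hny
  · -- near case: both related to q
    have hax0 : a * x₁ ≠ 0 := ne_zero_of_not_Rq hp hqa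
    have hqb : ¬ Rq p (b * y₁) := by
      intro hb
      apply hqa
      have e : a * x₁ = b * y₁ + (a * x₁ - b * y₁) := by ring
      rw [e]
      exact Rq_add hp hb D1
    have hby0 : b * y₁ ≠ 0 := ne_zero_of_not_Rq hp hqb
    have relxy : ∀ (z₁ z₂ c : ℚ), c ≠ 0 → c * z₁ ≠ 0 → ¬ Rq p (c * z₁) →
        Rm p (c * (z₂ / (p:ℚ))) → (z₁ ≠ 0 ∧ Rq p (z₂ / z₁)) := by
      intro z₁ z₂ c hc0 hcz hcq hcm
      have hz1 : z₁ ≠ 0 := fun hz => hcz (by rw [hz, mul_zero])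
      refine ⟨hz1, ?_⟩
      have e : z₂ / z₁ = ((p:ℚ) * (c * (z₂ / (p:ℚ)))) * (c * z₁)⁻¹ := by
        field_simp
      rw [e]
      exact Rq_mul_Rm hp (Rq_mul_Rm hp (Rq_p hp) hcm) (inv_Rm_of_not_Rq hp hcz hcq)
    have hrx : ZpRelV p (sp2 p q h) x q := by
      rw [rel_gen_iff hp hind hxe]
      exact relxy x₁ x₂ a ha0 hax0 hqa A2
    have hry : ZpRelV p (sp2 p q h) y q := by
      rw [rel_gen_iff hp hind hye]
      exact relxy y₁ y₂ b hb0 hby0 hqb B2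
    have h1 := hindB x q hx hq0 trivial trivial hrx
    have h2 := hindB y q hy hq0 trivial trivial hry
    rw [h1, h2]

/-- characterization of `sp2 q (p•h)` independent of the choice of `h`. -/
lemma B2_char {q h : V2} (hind : LinearIndependent ℚ ![q, h]) :
    sp2 p q ((p:ℚ) • h) = {x | x ∈ sp2 p q h ∧
      (x ∈ pSMul p (sp2 p q h) ∨ ZpRelV p (sp2 p q h) x q)} := by
  have hp0 := p_ne_zero' hp
  have hind' := indep_dilate hp hind hp0
  ext x
  obtain ⟨x₁, x₂, hxe⟩ := decomp2 hind x
  have hxe' : x = x₁ • q + (x₂ / (p:ℚ)) • ((p:ℚ) • h) := by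
    rw [hxe, smul_smul, div_mul_cancel₀ _ hp0]
  constructor
  · intro hx
    rw [hxe'] at hx
    rw [mem_sp2_iff hp hind'] at hx
    obtain ⟨h1, h2⟩ := hx
    have h2' : Rq p x₂ := h2
    refine ⟨by rw [hxe, mem_sp2_iff hp hind]; exact ⟨h1, h2'.toRm hp⟩, ?_⟩
    by_cases hq1 : Rq p x₁
    · left
      rw [hxe, mem_psp2_iff hp hind]
      exact ⟨hq1, h2'⟩
    · right
      rw [rel_gen_iff hp hind hxe]
      refine ⟨ne_zero_of_not_Rq hp hq1, ?_⟩
      rw [div_eq_mul_inv]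
      exact Rq_mul_Rm hp h2' (inv_Rm_of_not_Rq hp (ne_zero_of_not_Rq hp hq1) hq1)
  · rintro ⟨h1, hor⟩
    rw [hxe, mem_sp2_iff hp hind] at h1
    rw [hxe', mem_sp2_iff hp hind']
    refine ⟨h1.1, ?_⟩
    show Rq p x₂
    rcases hor with h2 | h2
    · rw [hxe, mem_psp2_iff hp hind] at h2
      exact h2.2
    · rw [rel_gen_iff hp hind hxe] at h2
      obtain ⟨hx1, hq⟩ := h2
      have e : x₂ = (x₂ / x₁) * x₁ := by field_simp
      rw [e]
      exact Rq_mul_Rm hp hq h1.1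

/-- `sp2 q (p•h)` only depends on the class of `q`. -/
lemma B2_eq {q h g h' : V2} (hindq : LinearIndependent ℚ ![q, h])
    (hindg : LinearIndependent ℚ ![g, h']) (hB : sp2 p q h = sp2 p g h')
    (hrel : ZpRelV p (sp2 p q h) g q) :
    sp2 p q ((p:ℚ) • h) = sp2 p g ((p:ℚ) • h') := by
  rw [B2_char hp hindq, B2_char hp hindg, ← hB]
  ext x
  simp only [Set.mem_setOf_eq]
  constructor
  · rintro ⟨h1, h2 | h2⟩
    · exact ⟨h1, Or.inl h2⟩
    · exact ⟨h1, Or.inr (rel_trans hp hindq h2 (rel_symm hp hrel))⟩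
  · rintro ⟨h1, h2 | h2⟩
    · exact ⟨h1, Or.inl h2⟩
    · exact ⟨h1, Or.inr (rel_trans hp hindq h2 hrel)⟩

/-- `B` and `B₂` are not equivalent. -/
lemma not_latEq_B2 {q h : V2} (hind : LinearIndependent ℚ ![q, h]) :
    ¬ LatEq (sp2 p q h) (sp2 p q ((p:ℚ) • h)) := by
  rintro ⟨c, hc0, himg⟩
  rw [image_sp2] at himg
  have hp0 := p_ne_zero' hp
  -- q ∈ sp2 (c•q) (c•h)
  have hq : q ∈ sp2 p (c • q) (c • h) := by
    rw [← himg]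
    exact sp2_gen_left hp
  obtain ⟨α, β, hα, hβ, hqe⟩ := hq
  have hqe' : (1:ℚ) • q + (0:ℚ) • h = (α * c) • q + (β * c) • h := by
    rw [show (α * c) • q + (β * c) • h = α • (c • q) + β • (c • h) from by module,
      ← hqe]
    module
  obtain ⟨e1, -⟩ := indep_coords hind hqe'
  have hcinv : Rm p c⁻¹ := by
    have hac : α = c⁻¹ := by
      field_simp
      linarith [e1.symm]
    rwa [← hac]
  -- c•h ∈ sp2 q (p•h)
  have hch : c • h ∈ sp2 p q ((p:ℚ) • h) := by
    rw [himg]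
    exact sp2_gen_right hp
  obtain ⟨a, b, ha, hb, hche⟩ := hch
  have hche' : (0:ℚ) • q + c • h = a • q + (b * (p:ℚ)) • h := by
    rw [show a • q + (b * (p:ℚ)) • h = a • q + b • ((p:ℚ) • h) from by module, ← hche]
    module
  obtain ⟨-, e2⟩ := indep_coords hind hche'
  have hcq : Rq p c := by
    show Rm p (c / p)
    rw [e2, mul_div_cancel_right₀ _ hp0]
    exact hb
  exact Rq_one_imp_false hp (by
    have e : (1:ℚ) = c * c⁻¹ := by rw [mul_inv_cancel₀ hc0]
    rw [e]
    exact Rq_mul_Rm hp hcq hcinv)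

/-- if the special point `q` is not in the class of `g`, there is a third class. -/
lemma third_class {g h : V2} (hind : LinearIndependent ℚ ![g, h]) {q : V2}
    (hqB : q ∈ sp2 p g h) (hqp : q ∉ pSMul p (sp2 p g h))
    (hnrel : ¬ ZpRelV p (sp2 p g h) q g) :
    ∃ z : V2, z ≠ 0 ∧ ¬ ZpRelV p (sp2 p g h) z g ∧ ¬ ZpRelV p (sp2 p g h) z q := by
  obtain ⟨q₁, q₂, hq₁, hq₂, hqe⟩ := hqB
  rw [hqe, mem_psp2_iff hp hind] at hqp
  -- q₂ is a unit
  have hq₂u : ¬ Rq p q₂ := by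
    intro hq
    rw [rel_gen_iff hp hind hqe] at hnrel
    push_neg at hnrel
    by_cases h1 : q₁ = 0
    · exact hqp ⟨by rw [h1]; exact Rq_zero hp, hq⟩
    · have hq₁u : ¬ Rq p q₁ := fun hc => hqp ⟨hc, hq⟩
      apply hnrel h1
      rw [div_eq_mul_inv]
      exact Rq_mul_Rm hp hq (inv_Rm_of_not_Rq hp h1 hq₁u)
  have hq₂0 : q₂ ≠ 0 := ne_zero_of_not_Rq hp hq₂u
  have hze : g + q = (1 + q₁) • g + q₂ • h := by rw [hqe]; module
  refine ⟨g + q, ?_, ?_, ?_⟩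
  · rw [hze]
    exact indep_comb_ne_zero hind (fun hc => hq₂0 hc.2)
  · rw [rel_gen_iff hp hind hze]
    rintro ⟨h1, h2⟩
    apply hq₂u
    have e : q₂ = (q₂ / (1 + q₁)) * (1 + q₁) := by field_simp
    rw [e]
    exact Rq_mul_Rm hp h2 (Rm_add hp (Rm_one hp) hq₁)
  · intro hrel
    rw [rel_iff hp hind hze hqe] at hrel
    obtain ⟨a, b, ha0, hb0, A1, A2, A3, B1, B2, B3, D1, D2⟩ := hrel
    -- a is a unit
    have hau : isU p a := by
      have h1 : Rm p (1 * (1 + q₁)) := by rw [one_mul]; exact Rm_add hp (Rm_one hp) hq₁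
      have h2 : Rm p (1 * q₂) := by rw [one_mul]; exact hq₂
      have h3 : ¬ (Rq p (1 * (1 + q₁)) ∧ Rq p (1 * q₂)) := by
        rw [one_mul, one_mul]
        exact fun hc => hq₂u hc.2
      have := normalizer_unit hp hind one_ne_zero ha0 h1 h2 h3 A1 A2 A3
      rwa [inv_one, mul_one] at this
    -- Rq (a - b)
    have hab : Rq p (a - b) := by
      have e : a - b = (a * q₂ - b * q₂) * q₂⁻¹ := by field_simp
      rw [e]
      exact Rq_mul_Rm hp D2 (inv_Rm_of_not_Rq hp hq₂0 hq₂u)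
    -- then Rq a, contradiction
    apply hau.2.2
    have e : a = (a * (1 + q₁) - b * q₁) - (a - b) * q₁ := by ring
    rw [e]
    exact Rq_sub hp D1 (Rq_mul_Rm hp hab hq₁)

lemma gen_left_not_p {g h : V2} (hig : LinearIndependent ℚ ![g, h]) :
    g ∉ pSMul p (sp2 p g h) := by
  intro hc
  have h2 : (1:ℚ) • g + (0:ℚ) • h ∈ pSMul p (sp2 p g h) := by
    rw [show (1:ℚ) • g + (0:ℚ) • h = g from by module]
    exact hc
  rw [mem_psp2_iff hp hig] at h2
  exact Rq_one_imp_false hp h2.1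

end analysis

end S9

open S9

/-- Lemma 3.4: let `f : ℙ(ℚ²) → A` be induced via a
`ℤ_(p)`-lattice `B` from a nonconstant map `f̄ : ℙ(B/pB) → A`.
(1) If `f̄` is a flag map (constant off one point), there are exactly two
equivalence classes of `f`-compatible lattices.
(2) If `f̄` is not a flag map, every `f`-compatible lattice is equivalent
to `B`. -/
theorem stmt9 (p : ℕ) (hp : p.Prime) (A : Type w)
    (f : Projectivization ℚ (Fin 2 → ℚ) → A) (B : Set (Fin 2 → ℚ))
    (hB : IsZpLatIn p ⊤ B) (hind : InducedOn f ⊤ p B)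
    (hnc : ∃ x y : Fin 2 → ℚ, ∃ hx : x ≠ 0, ∃ hy : y ≠ 0,
      f (Projectivization.mk ℚ x hx) ≠ f (Projectivization.mk ℚ y hy)) :
    (ResFlagLine f p B →
      ∃ B₁ B₂ : Set (Fin 2 → ℚ),
        (IsZpLatIn p ⊤ B₁ ∧ InducedOn f ⊤ p B₁) ∧
        (IsZpLatIn p ⊤ B₂ ∧ InducedOn f ⊤ p B₂) ∧
        ¬ LatEq B₁ B₂ ∧
        ∀ B' : Set (Fin 2 → ℚ), IsZpLatIn p ⊤ B' → InducedOn f ⊤ p B' →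
          (LatEq B' B₁ ∨ LatEq B' B₂))
    ∧ (¬ ResFlagLine f p B →
        ∀ B' : Set (Fin 2 → ℚ), IsZpLatIn p ⊤ B' → InducedOn f ⊤ p B' →
          LatEq B' B) := by
  obtain ⟨u, w, hi, rfl⟩ := lattice_form hp hB
  constructor
  · -- part (1)
    intro hflag
    obtain ⟨q, ⟨hqB, hqp⟩, Hq⟩ := hflag
    obtain ⟨h, hiqh, hBq⟩ := complete_basis hp hi hqB hqp
    -- hBq : sp2 p q h = sp2 p u w
    have hindq : InducedOn f ⊤ p (sp2 p q h) := by rw [hBq]; exact hind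
    rw [← hBq] at Hq
    refine ⟨sp2 p u w, sp2 p q ((p:ℚ) • h),
      ⟨sp2_lat hp hi, hind⟩,
      ⟨sp2_lat hp (indep_dilate hp hiqh (p_ne_zero' hp)), induced_B2 hp hiqh hindq Hq⟩,
      ?_, ?_⟩
    · rw [← hBq]
      exact not_latEq_B2 hp hiqh
    · intro B' hB'lat hB'ind
      obtain ⟨a, g, h', n, ha0, hig, hgh', himg⟩ := key_lemma hp hi hB'lat
      rcases Nat.eq_zero_or_pos n with hn0 | hn1
      · left
        subst hn0
        exact ⟨a, ha0, by rw [himg, pow_zero, one_smul, hgh']⟩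
      · have hindB'' : InducedOn f ⊤ p (sp2 p g ((p:ℚ)^n • h')) := by
          rw [← himg]
          exact inducedOn_image ha0 hB'ind
        have hindg : InducedOn f ⊤ p (sp2 p g h') := by rw [hgh']; exact hind
        have Hg := flag_of_far hp hig hn1 hindB''
        by_cases hrel : ZpRelV p (sp2 p g h') q g
        · by_cases hn2 : 2 ≤ n
          · exfalso
            obtain ⟨x, y, hx, hy, hne⟩ := hnc
            exact hne (const_of_n2 hp hig hn2 hindg hindB'' x y hx hy)
          · have hn1' : n = 1 := by omega
            subst hn1'
            right
            have hrel' : ZpRelV p (sp2 p q h) g q := by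
              rw [hBq, ← hgh']
              exact rel_symm hp hrel
            refine ⟨a, ha0, ?_⟩
            rw [himg, pow_one]
            exact B2_eq hp hiqh hig (hBq.trans hgh'.symm) hrel'
        · exfalso
          have hqB' : q ∈ sp2 p g h' := by rw [hgh']; exact hqB
          have hqp' : q ∉ pSMul p (sp2 p g h') := by rw [hgh']; exact hqp
          obtain ⟨z, hz0, hzg, hzq⟩ := third_class hp hig hqB' hqp' hrel
          rw [hBq, ← hgh'] at Hq
          have hkey : ∀ x : Fin 2 → ℚ, ∀ hx : x ≠ 0,
              f (Projectivization.mk ℚ x hx) = f (Projectivization.mk ℚ z hz0) := by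
            intro x hx
            by_cases hr : ZpRelV p (sp2 p g h') x g
            · have hg0 : g ≠ 0 := indep_ne_zero_left hig
              have h1 := hindg x g hx hg0 trivial trivial hr
              have hgq : ¬ ZpRelV p (sp2 p g h') g q := fun hc => hrel (rel_symm hp hc)
              have h2 := Hq g z hg0 hz0 hgq hzq
              rw [h1, h2]
            · exact Hg x z hx hz0 hr hzg
          obtain ⟨x, y, hx, hy, hne⟩ := hnc
          exact hne (by rw [hkey x hx, hkey y hy])
  · -- part (2)
    intro hnot B' hB'lat hB'ind
    obtain ⟨a, g, h', n, ha0, hig, hgh', himg⟩ := key_lemma hp hi hB'lat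
    rcases Nat.eq_zero_or_pos n with hn0 | hn1
    · subst hn0
      exact ⟨a, ha0, by rw [himg, pow_zero, one_smul, hgh']⟩
    · exfalso
      apply hnot
      have hindB'' : InducedOn f ⊤ p (sp2 p g ((p:ℚ)^n • h')) := by
        rw [← himg]
        exact inducedOn_image ha0 hB'ind
      have Hg := flag_of_far hp hig hn1 hindB''
      refine ⟨g, ⟨?_, ?_⟩, ?_⟩
      · rw [← hgh']
        exact sp2_gen_left hp
      · rw [← hgh']
        exact gen_left_not_p hp hig
      · intro x y hx hy hrx hry
        rw [← hgh'] at hrx hry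
        exact Hg x y hx hy hrx hry
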